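/- Let θ₀ ∈ (0,1), n ≥ 2, 1 ≤ k ≤ n−1, and α = k/n. Then the binomial probability satisfies C(n,k)·θ₀^k·(1−θ₀)^{n−k} ≤ (2π·α(1−α)·n)^{−1/2} · exp(−n·D(α‖θ₀)). -/

import Mathlib

noncomputable def klBern (θ θt : ℝ) : ℝ :=
  θ * Real.log (θ / θt) + (1 - θ) * Real.log ((1 - θ) / (1 - θt))

open Real Stirling Filter in
lemma sqrt_pi_le_stirling {i : ℕ} (hi : 1 ≤ i) : Real.sqrt π ≤ stirlingSeq i := by
  obtain ⟨j, rfl⟩ := Nat.exists_eq_add_of_le' hi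
  have h : Tendsto (stirlingSeq ∘ Nat.succ) atTop (nhds (Real.sqrt π)) :=
    tendsto_stirlingSeq_sqrt_pi.comp (tendsto_add_atTop_nat 1)
  exact stirlingSeq'_antitone.le_of_tendsto h j

open Real Stirling in
lemma stirling_anti {i j : ℕ} (hi : 1 ≤ i) (hij : i ≤ j) :
    stirlingSeq j ≤ stirlingSeq i := by
  obtain ⟨i, rfl⟩ := Nat.exists_eq_add_of_le' hi
  obtain ⟨d, rfl⟩ := Nat.exists_eq_add_of_le hij
  have := stirlingSeq'_antitone (Nat.le_add_right i d)
  simpa [Nat.succ_eq_add_one, Nat.add_right_comm] using this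

open Real Stirling in
lemma factorial_eq_stirling {m : ℕ} (hm : 1 ≤ m) :
    (m.factorial : ℝ) = stirlingSeq m * (Real.sqrt (2 * m) * ((m : ℝ) / Real.exp 1) ^ m) := by
  have hm' : (0:ℝ) < m := by exact_mod_cast hm
  rw [stirlingSeq, div_mul_cancel₀]
  positivity

open Real Stirling in
lemma choose_bound (k m : ℕ) (hk : 1 ≤ k) (hm : 1 ≤ m) :
    (((k + m).choose k : ℝ)) ≤
      Real.sqrt (((k:ℝ)+m) / (2 * π * k * m)) *
        ((((k:ℝ)+m)/k) ^ k * (((k:ℝ)+m)/m) ^ m) := by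
  have hK : (0:ℝ) < k := by exact_mod_cast hk
  have hM : (0:ℝ) < m := by exact_mod_cast hm
  have hN : (0:ℝ) < (k:ℝ) + m := by linarith
  have hcast : ((k+m:ℕ):ℝ) = (k:ℝ) + m := by push_cast; ring
  have hC : (((k + m).choose k : ℝ)) = ((k+m).factorial : ℝ) / ((k.factorial : ℝ) * (m.factorial : ℝ)) := by
    rw [Nat.cast_choose (K := ℝ) (Nat.le_add_right k m), Nat.add_sub_cancel_left]
  have hfn := factorial_eq_stirling (m := k + m) (by omega)
  have hfk := factorial_eq_stirling hk
  have hfm := factorial_eq_stirling hm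
  set a := stirlingSeq (k + m) with ha
  set b := stirlingSeq k with hb
  set c := stirlingSeq m with hc
  have hbpos : 0 < b := lt_of_lt_of_le (Real.sqrt_pos.mpr Real.pi_pos) (sqrt_pi_le_stirling hk)
  have hcpos : 0 < c := lt_of_lt_of_le (Real.sqrt_pos.mpr Real.pi_pos) (sqrt_pi_le_stirling hm)
  have hab : a ≤ b := stirling_anti hk (Nat.le_add_right k m)
  have hcge : Real.sqrt π ≤ c := sqrt_pi_le_stirling hm
  have hapos : 0 < a := by
    have : 0 < stirlingSeq (k + m) := by
      have : k + m = (k + m - 1) + 1 := by omega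
      rw [this]; exact stirlingSeq'_pos _
    exact this
  -- ratio bound
  have hratio : a / (b * c) ≤ 1 / Real.sqrt π := by
    rw [div_le_div_iff₀ (by positivity) (Real.sqrt_pos.mpr Real.pi_pos)]
    nlinarith [Real.sqrt_pos.mpr Real.pi_pos]
  -- exact expression for choose
  have hE : (((k + m).choose k : ℝ)) =
      (a / (b * c)) * (Real.sqrt (((k:ℝ)+m) / (2 * k * m)) *
        ((((k:ℝ)+m)/k) ^ k * (((k:ℝ)+m)/m) ^ m)) := by
    rw [hC, hfn, hfk, hfm, hcast]
    have hsq : Real.sqrt (2 * ((k:ℝ)+m)) = Real.sqrt (((k:ℝ)+m) / (2 * k * m)) *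
        (Real.sqrt (2*k) * Real.sqrt (2*m)) := by
      rw [← Real.sqrt_mul (by positivity), ← Real.sqrt_mul (by positivity)]
      congr 1
      field_simp
    have hpow : (((k:ℝ)+m) / Real.exp 1) ^ (k + m) =
        ((((k:ℝ)+m)/k) ^ k * (((k:ℝ)+m)/m) ^ m) * (((k:ℝ)/Real.exp 1) ^ k * ((m:ℝ)/Real.exp 1) ^ m) := by
      rw [pow_add]
      rw [div_pow, div_pow, div_pow, div_pow, div_pow]
      field_simp
      rw [div_pow]
      field_simp
    rw [hsq, hpow]
    have h1 : Real.sqrt (2*(k:ℝ)) ≠ 0 := by positivity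
    have h2 : Real.sqrt (2*(m:ℝ)) ≠ 0 := by positivity
    have h3 : ((k:ℝ)/Real.exp 1) ^ k ≠ 0 := by positivity
    have h4 : ((m:ℝ)/Real.exp 1) ^ m ≠ 0 := by positivity
    field_simp
  rw [hE]
  have hEpos : 0 ≤ Real.sqrt (((k:ℝ)+m) / (2 * k * m)) *
        ((((k:ℝ)+m)/k) ^ k * (((k:ℝ)+m)/m) ^ m) := by positivity
  calc (a / (b * c)) * _ ≤ (1 / Real.sqrt π) * (Real.sqrt (((k:ℝ)+m) / (2 * k * m)) *
        ((((k:ℝ)+m)/k) ^ k * (((k:ℝ)+m)/m) ^ m)) := by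
        exact mul_le_mul_of_nonneg_right hratio hEpos
    _ = Real.sqrt (((k:ℝ)+m) / (2 * π * k * m)) *
        ((((k:ℝ)+m)/k) ^ k * (((k:ℝ)+m)/m) ^ m) := by
        rw [one_div, ← Real.sqrt_inv, ← mul_assoc, ← Real.sqrt_mul (by positivity)]
        congr 2
        rw [eq_div_iff (by positivity)]
        field_simp

theorem binomial_upper_bound (θ₀ : ℝ) (hθ₀ : θ₀ ∈ Set.Ioo (0:ℝ) 1)
    (n k : ℕ) (hn : 2 ≤ n) (hk : 1 ≤ k) (hk' : k ≤ n - 1) :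
    (n.choose k : ℝ) * θ₀ ^ k * (1 - θ₀) ^ (n - k) ≤
      (1 / Real.sqrt (2 * Real.pi * ((k:ℝ)/n) * (1 - (k:ℝ)/n) * n)) *
        Real.exp (-(n:ℝ) * klBern ((k:ℝ)/n) θ₀) := by
  obtain ⟨hθ₀0, hθ₀1⟩ := hθ₀
  set m := n - k with hm_def
  have hm : 1 ≤ m := by omega
  have hnkm : n = k + m := by omega
  have hK : (0:ℝ) < k := by exact_mod_cast hk
  have hM : (0:ℝ) < m := by exact_mod_cast hm
  have hN : (0:ℝ) < n := by positivity
  have hNKM : (n:ℝ) = (k:ℝ) + m := by rw [hnkm]; push_cast; ring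
  have hθ₀' : 0 < 1 - θ₀ := by linarith
  -- simplify the sqrt argument
  have hsqarg : 2 * Real.pi * ((k:ℝ)/n) * (1 - (k:ℝ)/n) * n = 2 * Real.pi * k * m / n := by
    have h1 : 1 - (k:ℝ)/n = (m:ℝ)/n := by
      field_simp
      linarith [hNKM]
    rw [h1]
    field_simp
  -- simplify the exponential
  have hexp : Real.exp (-(n:ℝ) * klBern ((k:ℝ)/n) θ₀) =
      (θ₀ * ((n:ℝ)/k)) ^ k * ((1 - θ₀) * ((n:ℝ)/m)) ^ m := by
    have h1 : 1 - (k:ℝ)/n = (m:ℝ)/n := by field_simp; linarith [hNKM]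
    have hx : (0:ℝ) < θ₀ * ((n:ℝ)/k) := by positivity
    have hy : (0:ℝ) < (1 - θ₀) * ((n:ℝ)/m) := by positivity
    have harg : -(n:ℝ) * klBern ((k:ℝ)/n) θ₀ =
        (k:ℝ) * Real.log (θ₀ * ((n:ℝ)/k)) + (m:ℝ) * Real.log ((1 - θ₀) * ((n:ℝ)/m)) := by
      rw [klBern, h1]
      have hl1 : Real.log (((k:ℝ)/n) / θ₀) = - Real.log (θ₀ * ((n:ℝ)/k)) := by
        rw [← Real.log_inv]
        congr 1
        field_simp
      have hl2 : Real.log (((m:ℝ)/n) / (1 - θ₀)) = - Real.log ((1 - θ₀) * ((n:ℝ)/m)) := by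
        rw [← Real.log_inv]
        congr 1
        field_simp
      rw [h1] at *
      rw [hl1, hl2]
      field_simp
      ring
    rw [harg, Real.exp_add, Real.exp_nat_mul, Real.exp_nat_mul, Real.exp_log hx, Real.exp_log hy]
  rw [hsqarg, hexp]
  -- choose bound
  have hcb := choose_bound k m hk hm
  rw [← hNKM, ← hnkm] at hcb
  have hθpow : (0:ℝ) ≤ θ₀ ^ k * (1 - θ₀) ^ m := by positivity
  have key : (n.choose k : ℝ) * θ₀ ^ k * (1 - θ₀) ^ m ≤
      (Real.sqrt ((n:ℝ) / (2 * Real.pi * k * m)) * (((n:ℝ)/k) ^ k * ((n:ℝ)/m) ^ m)) *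
        (θ₀ ^ k * (1 - θ₀) ^ m) := by
    have := mul_le_mul_of_nonneg_right hcb hθpow
    calc (n.choose k : ℝ) * θ₀ ^ k * (1 - θ₀) ^ m
        = (n.choose k : ℝ) * (θ₀ ^ k * (1 - θ₀) ^ m) := by ring
      _ ≤ _ := this
  calc (n.choose k : ℝ) * θ₀ ^ k * (1 - θ₀) ^ (n - k)
      ≤ (Real.sqrt ((n:ℝ) / (2 * Real.pi * k * m)) * (((n:ℝ)/k) ^ k * ((n:ℝ)/m) ^ m)) *
        (θ₀ ^ k * (1 - θ₀) ^ m) := key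
    _ = (1 / Real.sqrt (2 * Real.pi * k * m / n)) *
        ((θ₀ * ((n:ℝ)/k)) ^ k * ((1 - θ₀) * ((n:ℝ)/m)) ^ m) := by
        rw [one_div, ← Real.sqrt_inv, inv_div, mul_pow, mul_pow]
        have : (2 * Real.pi * (k:ℝ) * m)⁻¹ * n  = (n:ℝ) / (2 * Real.pi * k * m) := by
          field_simp
        ring_nf
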